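/- For an integer ℓ, there exists an acute lattice triangle with lattice perimeter ℓ whose orthocenter is a lattice point, if and only if ℓ = 6 or ℓ ≥ 8. -/

import Mathlib

/-- Lattice length of the segment joining two lattice points. -/
def llen (P Q : ℤ × ℤ) : ℕ := Int.gcd (P.1 - Q.1) (P.2 - Q.2)

/-- Integer dot product on `ℤ × ℤ`. -/
def dotv (u v : ℤ × ℤ) : ℤ := u.1 * v.1 + u.2 * v.2

/-- The three vertices are not collinear (a genuine triangle). -/
def Noncollinear (V₀ V₁ V₂ : ℤ × ℤ) : Prop :=
  (V₁.1 - V₀.1) * (V₂.2 - V₀.2) - (V₂.1 - V₀.1) * (V₁.2 - V₀.2) ≠ 0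

/-- All three interior angles are strictly acute (positive dot products at each vertex). -/
def IsAcute (V₀ V₁ V₂ : ℤ × ℤ) : Prop :=
  0 < dotv (V₁ - V₀) (V₂ - V₀) ∧ 0 < dotv (V₀ - V₁) (V₂ - V₁) ∧
    0 < dotv (V₀ - V₂) (V₁ - V₂)

/-- `H` is the orthocenter of the triangle `V₀V₁V₂`. -/
def IsOrthocenter (H V₀ V₁ V₂ : ℤ × ℤ) : Prop :=
  dotv (H - V₀) (V₁ - V₂) = 0 ∧ dotv (H - V₁) (V₂ - V₀) = 0 ∧
    dotv (H - V₂) (V₀ - V₁) = 0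

/-- `F` is the circumcenter of the triangle `V₀V₁V₂` (equidistant from the vertices). -/
def IsCircumcenter (F V₀ V₁ V₂ : ℤ × ℤ) : Prop :=
  dotv (F - V₀) (F - V₀) = dotv (F - V₁) (F - V₁) ∧
    dotv (F - V₀) (F - V₀) = dotv (F - V₂) (F - V₂)

/-- Lattice perimeter of a lattice triangle. -/
def latPerim (V₀ V₁ V₂ : ℤ × ℤ) : ℕ := llen V₀ V₁ + llen V₁ V₂ + llen V₀ V₂

/-- The interior angle of the triangle at vertex `V`, with the other vertices `A`, `B`. -/
noncomputable def angleAt (V A B : ℤ × ℤ) : ℝ :=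
  Real.arccos ((((A.1 - V.1) * (B.1 - V.1) + (A.2 - V.2) * (B.2 - V.2) : ℤ) : ℝ) /
    (Real.sqrt (((A.1 - V.1) ^ 2 + (A.2 - V.2) ^ 2 : ℤ)) *
      Real.sqrt (((B.1 - V.1) ^ 2 + (B.2 - V.2) ^ 2 : ℤ))))

lemma abs_le_of_sq_lt {d B : ℤ} (hB : 0 ≤ B) (h : d^2 < (B+1)^2) : -B ≤ d ∧ d ≤ B := by
  constructor <;> nlinarith [sq_nonneg (d + B + 1), sq_nonneg (d - B - 1)]

lemma prim_pos {r1 r2 : ℤ} (h : Int.gcd r1 r2 = 1) : 1 ≤ r1^2 + r2^2 := by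
  rcases eq_or_ne r1 0 with h1 | h1
  · rcases eq_or_ne r2 0 with h2 | h2
    · subst h1; subst h2; simp at h
    · nlinarith [sq_nonneg r1, sq_pos_of_ne_zero h2]
  · nlinarith [sq_nonneg r2, sq_pos_of_ne_zero h1]

lemma prim_mod4 {r1 r2 : ℤ} (h : Int.gcd r1 r2 = 1) :
    (r1^2 + r2^2) % 4 = 1 ∨ (r1^2 + r2^2) % 4 = 2 := by
  have h1 := Int.even_or_odd r1
  have h2 := Int.even_or_odd r2
  rcases h1 with ⟨k, hk⟩ | ⟨k, hk⟩ <;> rcases h2 with ⟨m, hm⟩ | ⟨m, hm⟩ <;> subst hk <;> subst hm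
  · exfalso
    have h2 : (2:ℤ) ∣ (Int.gcd (k+k) (m+m) : ℤ) := Int.dvd_coe_gcd ⟨k, by ring⟩ ⟨m, by ring⟩
    rw [h] at h2; norm_num at h2
  · left; have e : (k+k)^2 + (2*m+1)^2 = 4*(k^2+m^2+m) + 1 := by ring
    omega
  · left; have e : (2*k+1)^2 + (m+m)^2 = 4*(k^2+k+m^2) + 1 := by ring
    omega
  · right; have e : (2*k+1)^2 + (2*m+1)^2 = 4*(k^2+k+m^2+m) + 2 := by ring
    omega

lemma perp_decomp (u v p q : ℤ) (n : ℕ) (hn : Int.gcd u v = n)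
    (hnz : ¬(u = 0 ∧ v = 0)) (hperp : p*u + q*v = 0) :
    ∃ r1 r2 δ : ℤ, u = n*r1 ∧ v = n*r2 ∧ Int.gcd r1 r2 = 1 ∧ p = -(δ*r2) ∧ q = δ*r1 := by
  have hn0 : 0 < (n:ℤ) := by
    rcases Nat.eq_zero_or_pos n with h0 | h0
    · exfalso; subst h0; rw [Int.gcd_eq_zero_iff] at hn; exact hnz hn
    · exact_mod_cast h0
  have hdu : (n:ℤ) ∣ u := hn ▸ Int.gcd_dvd_left u v
  have hdv : (n:ℤ) ∣ v := hn ▸ Int.gcd_dvd_right u v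
  obtain ⟨r1, hr1⟩ := hdu
  obtain ⟨r2, hr2⟩ := hdv
  have hg : Int.gcd r1 r2 = 1 := by
    have h' : 0 < Int.gcd u v := by rw [hn]; exact_mod_cast hn0
    have := Int.gcd_div_gcd_div_gcd h'
    rw [hn] at this
    rwa [hr1, hr2, Int.mul_ediv_cancel_left _ (ne_of_gt hn0),
      Int.mul_ediv_cancel_left _ (ne_of_gt hn0)] at this
  have hperp' : p*r1 + q*r2 = 0 := by
    have : (n:ℤ) * (p*r1 + q*r2) = 0 := by rw [← hperp, hr1, hr2]; ring
    exact (mul_eq_zero.mp this).resolve_left (ne_of_gt hn0)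
  obtain ⟨α, β, hab⟩ : IsCoprime r1 r2 := Int.isCoprime_iff_gcd_eq_one.mpr hg
  refine ⟨r1, r2, α*q - β*p, hr1, hr2, hg, ?_, ?_⟩
  · linear_combination (-p)*hab + α*hperp'
  · linear_combination (-q)*hab + β*hperp'

lemma bridge (x0 y0 x1 y1 x2 y2 t : ℤ)
    (h01 : x0*x1 + y0*y1 = t) (h02 : x0*x2 + y0*y2 = t) (h12 : x1*x2 + y1*y2 = t)
    (hA0 : 0 < x0^2 + y0^2 - t) (hA1 : 0 < x1^2 + y1^2 - t) (hA2 : 0 < x2^2 + y2^2 - t) :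
    t < 0 := by
  by_contra hc
  push_neg at hc
  have i0 : t*t + (x0*y1 - x1*y0)*(x0*y2 - x2*y0) = (x0^2+y0^2)*t := by
    linear_combination (-t)*h01 + (-(x0*x1+y0*y1))*h02 + (x0^2+y0^2)*h12
  have i1 : t*t - (x0*y1 - x1*y0)*(x1*y2 - x2*y1) = (x1^2+y1^2)*t := by
    linear_combination (-t)*h01 + (-(x0*x1+y0*y1))*h12 + (x1^2+y1^2)*h02
  have i2 : t*t - (x1*y2 - x2*y1)*(x2*y0 - x0*y2) = (x2^2+y2^2)*t := by
    linear_combination (-t)*h02 + (-(x0*x2+y0*y2))*h12 + (x2^2+y2^2)*h01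
  have L01 : t*t + (x0*y1 - x1*y0)^2 = (x0^2+y0^2)*(x1^2+y1^2) := by
    linear_combination (-(t + (x0*x1+y0*y1)))*h01
  have L02 : t*t + (x0*y2 - x2*y0)^2 = (x0^2+y0^2)*(x2^2+y2^2) := by
    linear_combination (-(t + (x0*x2+y0*y2)))*h02
  rcases eq_or_lt_of_le hc with heq | hpos
  · rw [← heq] at i0 L01 L02 hA0 hA1 hA2
    simp only [mul_zero, zero_add, sub_zero, mul_one] at i0 L01 L02 hA0 hA1 hA2
    rcases mul_eq_zero.mp (by linarith : (x0*y1 - x1*y0)*(x0*y2 - x2*y0) = 0) with h | h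
    · rw [h] at L01; simp at L01; nlinarith [mul_pos hA0 hA1]
    · rw [h] at L02; simp at L02; nlinarith [mul_pos hA0 hA2]
  · have p1 : 0 < (x0*y1 - x1*y0)*(x0*y2 - x2*y0) := by nlinarith [mul_pos hpos hA0]
    have p2 : (x0*y1 - x1*y0)*(x1*y2 - x2*y1) < 0 := by nlinarith [mul_pos hpos hA1]
    have p3 : (x1*y2 - x2*y1)*(x2*y0 - x0*y2) < 0 := by nlinarith [mul_pos hpos hA2]
    have q : 0 < ((x0*y1 - x1*y0)*(x1*y2 - x2*y1)) * ((x1*y2 - x2*y1)*(x2*y0 - x0*y2)) :=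
      mul_pos_of_neg_of_neg p2 p3
    have q2 : 0 < (((x0*y1 - x1*y0)*(x1*y2 - x2*y1)) * ((x1*y2 - x2*y1)*(x2*y0 - x0*y2))) *
        ((x0*y1 - x1*y0)*(x0*y2 - x2*y0)) := mul_pos q p1
    have e : (((x0*y1 - x1*y0)*(x1*y2 - x2*y1)) * ((x1*y2 - x2*y1)*(x2*y0 - x0*y2))) *
        ((x0*y1 - x1*y0)*(x0*y2 - x2*y0)) = -((x0*y1 - x1*y0)*(x1*y2 - x2*y1)*(x2*y0 - x0*y2))^2 := by
      ring
    rw [e] at q2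
    linarith [sq_nonneg ((x0*y1 - x1*y0)*(x1*y2 - x2*y1)*(x2*y0 - x0*y2))]


set_option maxHeartbeats 3000000 in
lemma core (a b c d0 d1 d2 N0 N1 N2 s : ℤ)
    (ha : 1 ≤ a) (hab : a ≤ b) (hbc : b ≤ c)
    (hN0 : 1 ≤ N0) (hN1 : 1 ≤ N1) (hN2 : 1 ≤ N2) (hs : 1 ≤ s)
    (hd0 : d0 ≠ 0) (hd1 : d1 ≠ 0) (hd2 : d2 ≠ 0)
    (hm0 : N0 % 4 = 1 ∨ N0 % 4 = 2) (hm1 : N1 % 4 = 1 ∨ N1 % 4 = 2)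
    (hm2 : N2 % 4 = 1 ∨ N2 % 4 = 2)
    (hE0 : a^2*N0 = d1^2*N1 + d2^2*N2 + 2*s)
    (hE1 : b^2*N1 = d0^2*N0 + d2^2*N2 + 2*s)
    (hE2 : c^2*N2 = d0^2*N0 + d1^2*N1 + 2*s)
    (hG : (d0^2*N0)*(d1^2*N1)*(d2^2*N2) = s^2*(d0^2*N0+d1^2*N1+d2^2*N2) + 2*s^3) :
    6 ≤ a + b + c ∧ a + b + c ≠ 7 := by
  by_contra hcon
  have hbad : a+b+c ≤ 5 ∨ a+b+c = 7 := by omega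
  have e0 : 1 ≤ d0^2 := by nlinarith [sq_pos_of_ne_zero hd0]
  have e1 : 1 ≤ d1^2 := by nlinarith [sq_pos_of_ne_zero hd1]
  have e2 : 1 ≤ d2^2 := by nlinarith [sq_pos_of_ne_zero hd2]
  obtain ⟨T, hT⟩ : ∃ T : ℤ, T = d0^2*N0 + d1^2*N1 + d2^2*N2 + 2*s := ⟨_, rfl⟩
  have hT0 : (a^2 + d0^2)*N0 = T := by linear_combination hE0 - hT
  have hT1 : (b^2 + d1^2)*N1 = T := by linear_combination hE1 - hT
  have hT2 : (c^2 + d2^2)*N2 = T := by linear_combination hE2 - hT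
  have hP0 : 0 < a^2 + d0^2 := by nlinarith
  have hP1 : 0 < b^2 + d1^2 := by nlinarith
  have hP2 : 0 < c^2 + d2^2 := by nlinarith
  have hPP : 0 < (a^2+d0^2)*(b^2+d1^2)*(c^2+d2^2) := mul_pos (mul_pos hP0 hP1) hP2
  have hTpos : 0 < T := by nlinarith [mul_pos hP0 (show (0:ℤ) < N0 by linarith)]
  have hGT : s^2*T = (d0^2*N0)*(d1^2*N1)*(d2^2*N2) := by linear_combination s^2*hT - hG
  have hT3 : (N0*N1*N2)*((a^2+d0^2)*(b^2+d1^2)*(c^2+d2^2)) = T^3 := by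
    linear_combination ((b^2+d1^2)*N1*((c^2+d2^2)*N2))*hT0 + (T*((c^2+d2^2)*N2))*hT1 + T^2*hT2
  have key1 : T*(s^2*((a^2+d0^2)*(b^2+d1^2)*(c^2+d2^2))) = T*((d0*d1*d2)^2*T^2) := by
    linear_combination ((a^2+d0^2)*(b^2+d1^2)*(c^2+d2^2))*hGT + ((d0*d1*d2)^2)*hT3
  have key2 : s^2*((a^2+d0^2)*(b^2+d1^2)*(c^2+d2^2)) = (d0*d1*d2)^2*T^2 :=
    mul_left_cancel₀ (ne_of_gt hTpos) key1
  obtain ⟨D, hD⟩ : ∃ D : ℤ, D = (a^2+d0^2)*(b^2+d1^2)*(c^2+d2^2)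
      - (d0^2*((b^2+d1^2)*(c^2+d2^2)) + d1^2*((a^2+d0^2)*(c^2+d2^2))
        + d2^2*((a^2+d0^2)*(b^2+d1^2))) := ⟨_, rfl⟩
  have hDT : T*D = 2*s*((a^2+d0^2)*(b^2+d1^2)*(c^2+d2^2)) := by
    linear_combination T*hD + ((a^2+d0^2)*(b^2+d1^2)*(c^2+d2^2))*hT
      + (d0^2*((b^2+d1^2)*(c^2+d2^2)))*hT0 + (d1^2*((a^2+d0^2)*(c^2+d2^2)))*hT1
      + (d2^2*((a^2+d0^2)*(b^2+d1^2)))*hT2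
  have hDpos : 0 < D := by
    by_contra hDn
    push_neg at hDn
    have h2 : 0 < 2*s*((a^2+d0^2)*(b^2+d1^2)*(c^2+d2^2)) := by positivity
    nlinarith [mul_nonpos_of_nonneg_of_nonpos (le_of_lt hTpos) hDn]
  have hDsq' : T^2*(D^2) = T^2*(4*(d0*d1*d2)^2*((a^2+d0^2)*(b^2+d1^2)*(c^2+d2^2))) := by
    linear_combination (T*D + 2*s*((a^2+d0^2)*(b^2+d1^2)*(c^2+d2^2)))*hDT
      + (4*((a^2+d0^2)*(b^2+d1^2)*(c^2+d2^2)))*key2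
  have hDsq : D^2 = 4*(d0*d1*d2)^2*((a^2+d0^2)*(b^2+d1^2)*(c^2+d2^2)) :=
    mul_left_cancel₀ (ne_of_gt (pow_pos hTpos 2)) hDsq'
  have hProd : (a*b*c - (a*(d1*d2) + b*(d0*d2) + c*(d0*d1)))
      * (a*b*c + a*(d1*d2) + b*(d0*d2) - c*(d0*d1))
      * (a*b*c + a*(d1*d2) - b*(d0*d2) + c*(d0*d1))
      * (a*b*c - a*(d1*d2) + b*(d0*d2) + c*(d0*d1)) = 0 := by
    linear_combination hDsq - (D + ((a^2+d0^2)*(b^2+d1^2)*(c^2+d2^2)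
      - (d0^2*((b^2+d1^2)*(c^2+d2^2)) + d1^2*((a^2+d0^2)*(c^2+d2^2))
        + d2^2*((a^2+d0^2)*(b^2+d1^2)))))*hD
  subst hD
  subst hT
  clear hGT hT3 key1 key2 hDsq' hDsq hDT hT0 hT1 hT2 hG
  obtain ⟨m0, hg0, habs0⟩ : ∃ m : ℤ, 1 ≤ m ∧ (m = d0 ∨ m = -d0) := by
    rcases le_or_gt 0 d0 with h | h
    · exact ⟨d0, by omega, Or.inl rfl⟩
    · exact ⟨-d0, by omega, Or.inr rfl⟩
  obtain ⟨m1, hg1, habs1⟩ : ∃ m : ℤ, 1 ≤ m ∧ (m = d1 ∨ m = -d1) := by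
    rcases le_or_gt 0 d1 with h | h
    · exact ⟨d1, by omega, Or.inl rfl⟩
    · exact ⟨-d1, by omega, Or.inr rfl⟩
  obtain ⟨m2, hg2, habs2⟩ : ∃ m : ℤ, 1 ≤ m ∧ (m = d2 ∨ m = -d2) := by
    rcases le_or_gt 0 d2 with h | h
    · exact ⟨d2, by omega, Or.inl rfl⟩
    · exact ⟨-d2, by omega, Or.inr rfl⟩
  have hP' : (a*b*c - (a*(m1*m2) + b*(m0*m2) + c*(m0*m1)))
      * (a*b*c + a*(m1*m2) + b*(m0*m2) - c*(m0*m1))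
      * (a*b*c + a*(m1*m2) - b*(m0*m2) + c*(m0*m1))
      * (a*b*c - a*(m1*m2) + b*(m0*m2) + c*(m0*m1)) = 0 := by
    rcases habs0 with rfl | rfl <;> rcases habs1 with rfl | rfl <;>
      rcases habs2 with rfl | rfl <;> linear_combination hProd
  have hsq0 : m0^2 = d0^2 := by rcases habs0 with rfl | rfl <;> ring
  have hsq1 : m1^2 = d1^2 := by rcases habs1 with rfl | rfl <;> ring
  have hsq2 : m2^2 = d2^2 := by rcases habs2 with rfl | rfl <;> ring
  simp only [← hsq0, ← hsq1, ← hsq2] at hDpos hE0 hE1 hE2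
  clear hProd hsq0 hsq1 hsq2 habs0 habs1 habs2 hd0 hd1 hd2 e0 e1 e2
  have g0' : (0:ℤ) ≤ m0^2 - 1 := by nlinarith
  have g1' : (0:ℤ) ≤ m1^2 - 1 := by nlinarith
  have g2' : (0:ℤ) ≤ m2^2 - 1 := by nlinarith
  have hpat : (a = 1 ∧ b = 1) ∨ (a = 1 ∧ b = 2 ∧ c = 2) ∨ (a = 1 ∧ b = 2 ∧ c = 4)
      ∨ (a = 1 ∧ b = 3 ∧ c = 3) ∨ (a = 2 ∧ b = 2 ∧ c = 3) := by omega
  rcases hpat with ⟨rfl, rfl⟩ | ⟨rfl, rfl, rfl⟩ | ⟨rfl, rfl, rfl⟩ | ⟨rfl, rfl, rfl⟩ | ⟨rfl, rfl, rfl⟩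
  · -- a = b = 1
    have h01p : (1:ℤ) ≤ m0^2*m1^2 := by nlinarith
    linarith [hDpos, mul_nonneg (by linarith : (0:ℤ) ≤ m0^2*m1^2 - 1)
        (by positivity : (0:ℤ) ≤ c^2+m2^2),
      mul_nonneg (mul_nonneg (by nlinarith : (0:ℤ) ≤ m2^2 - 1 + 1)
        (by positivity : (0:ℤ) ≤ 1+m0^2)) (by positivity : (0:ℤ) ≤ 1+m1^2),
      mul_nonneg (mul_nonneg g2' (by positivity : (0:ℤ) ≤ 1+m0^2))
        (by positivity : (0:ℤ) ≤ 1+m1^2)]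
  · -- (1,2,2)
    have hb0 : m0 ≤ 1 := by
      by_contra hx; push_neg at hx
      have g0 : (0:ℤ) ≤ m0^2 - 4 := by nlinarith
      linarith [hDpos, mul_nonneg g0 g1', mul_nonneg g0 g2', mul_nonneg g1' g2',
        mul_nonneg (mul_nonneg g0 g1') g2']
    have hb1 : m1 ≤ 1 := by
      by_contra hx; push_neg at hx
      have g1 : (0:ℤ) ≤ m1^2 - 4 := by nlinarith
      linarith [hDpos, mul_nonneg g0' g1, mul_nonneg g0' g2', mul_nonneg g1 g2',
        mul_nonneg (mul_nonneg g0' g1) g2']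
    have hb2 : m2 ≤ 1 := by
      by_contra hx; push_neg at hx
      have g2 : (0:ℤ) ≤ m2^2 - 4 := by nlinarith
      linarith [hDpos, mul_nonneg g0' g1', mul_nonneg g0' g2, mul_nonneg g1' g2,
        mul_nonneg (mul_nonneg g0' g1') g2]
    clear hDpos g0' g1' g2'
    interval_cases m0 <;> interval_cases m1 <;> interval_cases m2 <;>
      first
        | (norm_num at hP'; done)
        | (norm_num at hE0 hE1; omega)
  · -- (1,2,4)
    have hb0 : m0 ≤ 1 := by
      by_contra hx; push_neg at hx
      have g0 : (0:ℤ) ≤ m0^2 - 4 := by nlinarith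
      linarith [hDpos, mul_nonneg g0 g1', mul_nonneg g0 g2', mul_nonneg g1' g2',
        mul_nonneg (mul_nonneg g0 g1') g2']
    have hb1 : m1 ≤ 1 := by
      by_contra hx; push_neg at hx
      have g1 : (0:ℤ) ≤ m1^2 - 4 := by nlinarith
      linarith [hDpos, mul_nonneg g0' g1, mul_nonneg g0' g2', mul_nonneg g1 g2',
        mul_nonneg (mul_nonneg g0' g1) g2']
    have hb2 : m2 ≤ 2 := by
      by_contra hx; push_neg at hx
      have g2 : (0:ℤ) ≤ m2^2 - 9 := by nlinarith
      linarith [hDpos, mul_nonneg g0' g1', mul_nonneg g0' g2, mul_nonneg g1' g2,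
        mul_nonneg (mul_nonneg g0' g1') g2]
    clear hDpos g0' g1' g2'
    interval_cases m0 <;> interval_cases m1 <;> interval_cases m2 <;>
      first
        | (norm_num at hP'; done)
        | (norm_num at hE0 hE1; omega)
  · -- (1,3,3)
    have hb0 : m0 ≤ 1 := by
      by_contra hx; push_neg at hx
      have g0 : (0:ℤ) ≤ m0^2 - 4 := by nlinarith
      linarith [hDpos, mul_nonneg g0 g1', mul_nonneg g0 g2', mul_nonneg g1' g2',
        mul_nonneg (mul_nonneg g0 g1') g2']
    have hb1 : m1 ≤ 2 := by
      by_contra hx; push_neg at hx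
      have g1 : (0:ℤ) ≤ m1^2 - 9 := by nlinarith
      linarith [hDpos, mul_nonneg g0' g1, mul_nonneg g0' g2', mul_nonneg g1 g2',
        mul_nonneg (mul_nonneg g0' g1) g2']
    have hb2 : m2 ≤ 2 := by
      by_contra hx; push_neg at hx
      have g2 : (0:ℤ) ≤ m2^2 - 9 := by nlinarith
      linarith [hDpos, mul_nonneg g0' g1', mul_nonneg g0' g2, mul_nonneg g1' g2,
        mul_nonneg (mul_nonneg g0' g1') g2]
    clear hDpos g0' g1' g2'
    interval_cases m0 <;> interval_cases m1 <;> interval_cases m2 <;>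
      first
        | (norm_num at hP'; done)
        | (norm_num at hE0 hE1; omega)
  · -- (2,2,3)
    have hb0 : m0 ≤ 3 := by
      by_contra hx; push_neg at hx
      have g0 : (0:ℤ) ≤ m0^2 - 16 := by nlinarith
      linarith [hDpos, mul_nonneg g0 g1', mul_nonneg g0 g2', mul_nonneg g1' g2',
        mul_nonneg (mul_nonneg g0 g1') g2']
    have hb1 : m1 ≤ 3 := by
      by_contra hx; push_neg at hx
      have g1 : (0:ℤ) ≤ m1^2 - 16 := by nlinarith
      linarith [hDpos, mul_nonneg g0' g1, mul_nonneg g0' g2', mul_nonneg g1 g2',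
        mul_nonneg (mul_nonneg g0' g1) g2']
    have hb2 : m2 ≤ 3 := by
      by_contra hx; push_neg at hx
      have g2 : (0:ℤ) ≤ m2^2 - 16 := by nlinarith
      linarith [hDpos, mul_nonneg g0' g1', mul_nonneg g0' g2, mul_nonneg g1' g2,
        mul_nonneg (mul_nonneg g0' g1') g2]
    clear hDpos g0' g1' g2'
    interval_cases m0 <;> interval_cases m1 <;> interval_cases m2 <;>
      first
        | (norm_num at hP'; done)
        | (norm_num at hE0 hE1; omega)

lemma core' (a b c d0 d1 d2 N0 N1 N2 s : ℤ)
    (ha : 1 ≤ a) (hb : 1 ≤ b) (hc : 1 ≤ c)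
    (hN0 : 1 ≤ N0) (hN1 : 1 ≤ N1) (hN2 : 1 ≤ N2) (hs : 1 ≤ s)
    (hd0 : d0 ≠ 0) (hd1 : d1 ≠ 0) (hd2 : d2 ≠ 0)
    (hm0 : N0 % 4 = 1 ∨ N0 % 4 = 2) (hm1 : N1 % 4 = 1 ∨ N1 % 4 = 2)
    (hm2 : N2 % 4 = 1 ∨ N2 % 4 = 2)
    (hE0 : a^2*N0 = d1^2*N1 + d2^2*N2 + 2*s)
    (hE1 : b^2*N1 = d0^2*N0 + d2^2*N2 + 2*s)
    (hE2 : c^2*N2 = d0^2*N0 + d1^2*N1 + 2*s)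
    (hG : (d0^2*N0)*(d1^2*N1)*(d2^2*N2) = s^2*(d0^2*N0+d1^2*N1+d2^2*N2) + 2*s^3) :
    6 ≤ a + b + c ∧ a + b + c ≠ 7 := by
  rcases le_total a b with hab | hab
  · rcases le_total b c with hbc | hbc
    · exact core a b c d0 d1 d2 N0 N1 N2 s ha hab hbc hN0 hN1 hN2 hs hd0 hd1 hd2
        hm0 hm1 hm2 hE0 hE1 hE2 hG
    · rcases le_total a c with hac | hac
      · have := core a c b d0 d2 d1 N0 N2 N1 s ha hac hbc hN0 hN2 hN1 hs hd0 hd2 hd1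
          hm0 hm2 hm1 (by linear_combination hE0) (by linear_combination hE2)
          (by linear_combination hE1) (by linear_combination hG)
        omega
      · have := core c a b d2 d0 d1 N2 N0 N1 s hc hac hab hN2 hN0 hN1 hs hd2 hd0 hd1
          hm2 hm0 hm1 (by linear_combination hE2) (by linear_combination hE0)
          (by linear_combination hE1) (by linear_combination hG)
        omega
  · rcases le_total a c with hac | hac
    · have := core b a c d1 d0 d2 N1 N0 N2 s hb hab hac hN1 hN0 hN2 hs hd1 hd0 hd2
        hm1 hm0 hm2 (by linear_combination hE1) (by linear_combination hE0)
        (by linear_combination hE2) (by linear_combination hG)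
      omega
    · rcases le_total b c with hbc | hbc
      · have := core b c a d1 d2 d0 N1 N2 N0 s hb hbc hac hN1 hN2 hN0 hs hd1 hd2 hd0
          hm1 hm2 hm0 (by linear_combination hE1) (by linear_combination hE2)
          (by linear_combination hE0) (by linear_combination hG)
        omega
      · have := core c b a d2 d1 d0 N2 N1 N0 s hc hbc hab hN2 hN1 hN0 hs hd2 hd1 hd0
          hm2 hm1 hm0 (by linear_combination hE2) (by linear_combination hE1)
          (by linear_combination hE0) (by linear_combination hG)
        omega

lemma fam (u v h k : ℤ) (hu : 0 < u) (hv : 0 < v) (hh : 0 < h)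
    (hor : k * h = u * v) (hac : u * v < h^2) :
    IsAcute (-u, 0) (v, 0) (0, h) ∧ IsOrthocenter (0, k) (-u, 0) (v, 0) (0, h) := by
  refine ⟨⟨?_, ?_, ?_⟩, ?_, ?_, ?_⟩ <;>
    simp only [IsAcute, IsOrthocenter, dotv, Prod.mk_sub_mk, Prod.fst, Prod.snd] <;> nlinarith

lemma perim_fam (u v h : ℕ) (hu : 0 < u) (hv : 0 < v) :
    latPerim (-(u:ℤ), 0) ((v:ℤ), 0) (0, (h:ℤ)) = (u + v) + Nat.gcd v h + Nat.gcd u h := by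
  unfold latPerim llen
  congr 1
  · congr 1
    · -- llen V0 V1 = u + v
      show Int.gcd (-(u:ℤ) - v) (0 - 0) = u + v
      simp only [Int.gcd, sub_zero, Int.natAbs_zero, Nat.gcd_zero_right]
      omega
    · -- llen V1 V2 = gcd v h
      show Int.gcd ((v:ℤ) - 0) (0 - (h:ℤ)) = Nat.gcd v h
      simp [Int.gcd]
  · -- llen V0 V2 = gcd u h
    show Int.gcd (-(u:ℤ) - 0) (0 - (h:ℤ)) = Nat.gcd u h
    simp [Int.gcd]

lemma odd_gcd2 (h : ℕ) (hodd : h % 2 = 1) : Nat.gcd 2 h = 1 := by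
  rw [Nat.gcd_rec]; simp [hodd]

lemma odd_gcd4 (h : ℕ) (hodd : h % 2 = 1) : Nat.gcd 4 h = 1 := by
  rw [Nat.gcd_rec]
  have : h % 4 = 1 ∨ h % 4 = 3 := by omega
  rcases this with h4 | h4 <;> rw [h4] <;> decide


theorem stmt14 (ℓ : ℕ) :
    (∃ V₀ V₁ V₂ H : ℤ × ℤ, IsAcute V₀ V₁ V₂ ∧ IsOrthocenter H V₀ V₁ V₂ ∧
      latPerim V₀ V₁ V₂ = ℓ) ↔ (ℓ = 6 ∨ 8 ≤ ℓ) := by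
  constructor
  · intro hEx
    obtain ⟨V₀, V₁, V₂, H, ⟨hA0, hA1, hA2⟩, ⟨hO0, hO1, hO2⟩, hP⟩ := hEx
    simp only [dotv, Prod.fst_sub, Prod.snd_sub] at hA0 hA1 hA2 hO0 hO1 hO2
    -- nondegenerate sides
    have hnz0 : ¬(V₁.1 - V₂.1 = 0 ∧ V₁.2 - V₂.2 = 0) := by
      rintro ⟨h1, h2⟩
      have e : (V₀.1 - V₂.1) * (V₁.1 - V₂.1) + (V₀.2 - V₂.2) * (V₁.2 - V₂.2) = 0 := by
        linear_combination (V₀.1 - V₂.1)*h1 + (V₀.2 - V₂.2)*h2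
      linarith [hA2]
    have hnz1 : ¬(V₀.1 - V₂.1 = 0 ∧ V₀.2 - V₂.2 = 0) := by
      rintro ⟨h1, h2⟩
      have e : (V₁.1 - V₀.1) * (V₂.1 - V₀.1) + (V₁.2 - V₀.2) * (V₂.2 - V₀.2) = 0 := by
        linear_combination (V₀.1 - V₁.1)*h1 + (V₀.2 - V₁.2)*h2
      linarith [hA0]
    have hnz2 : ¬(V₀.1 - V₁.1 = 0 ∧ V₀.2 - V₁.2 = 0) := by
      rintro ⟨h1, h2⟩
      have e : (V₁.1 - V₀.1) * (V₂.1 - V₀.1) + (V₁.2 - V₀.2) * (V₂.2 - V₀.2) = 0 := by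
        linear_combination (V₀.1 - V₂.1)*h1 + (V₀.2 - V₂.2)*h2
      linarith [hA0]
    obtain ⟨p0, q0, d0, hs01, hs02, hg0, hx0, hy0⟩ :=
      perp_decomp (V₁.1 - V₂.1) (V₁.2 - V₂.2) (V₀.1 - H.1) (V₀.2 - H.2) (llen V₁ V₂) rfl
        hnz0 (by linear_combination -hO0)
    obtain ⟨p1, q1, d1, hs11, hs12, hg1, hx1, hy1⟩ :=
      perp_decomp (V₀.1 - V₂.1) (V₀.2 - V₂.2) (V₁.1 - H.1) (V₁.2 - H.2) (llen V₀ V₂) rfl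
        hnz1 (by linear_combination hO1)
    obtain ⟨p2, q2, d2, hs21, hs22, hg2, hx2, hy2⟩ :=
      perp_decomp (V₀.1 - V₁.1) (V₀.2 - V₁.2) (V₂.1 - H.1) (V₂.2 - H.2) (llen V₀ V₁) rfl
        hnz2 (by linear_combination -hO2)
    -- the common dot product t
    obtain ⟨t, ht⟩ : ∃ t : ℤ, t = (V₀.1 - H.1)*(V₁.1 - H.1) + (V₀.2 - H.2)*(V₁.2 - H.2) :=
      ⟨_, rfl⟩
    have h02 : (V₀.1 - H.1)*(V₂.1 - H.1) + (V₀.2 - H.2)*(V₂.2 - H.2) = t := by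
      linear_combination hO0 - ht
    have h12 : (V₁.1 - H.1)*(V₂.1 - H.1) + (V₁.2 - H.2)*(V₂.2 - H.2) = t := by
      linear_combination (-1)*hO1 - ht
    -- acute conditions in terms of t
    have hA0' : 0 < (V₀.1 - H.1)^2 + (V₀.2 - H.2)^2 - t := by
      have e : (V₁.1 - V₀.1) * (V₂.1 - V₀.1) + (V₁.2 - V₀.2) * (V₂.2 - V₀.2)
          = (V₀.1 - H.1)^2 + (V₀.2 - H.2)^2 - t := by
        linear_combination h12 - h02 + ht
      linarith [hA0]
    have hA1' : 0 < (V₁.1 - H.1)^2 + (V₁.2 - H.2)^2 - t := by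
      have e : (V₀.1 - V₁.1) * (V₂.1 - V₁.1) + (V₀.2 - V₁.2) * (V₂.2 - V₁.2)
          = (V₁.1 - H.1)^2 + (V₁.2 - H.2)^2 - t := by
        linear_combination h02 - h12 + ht
      linarith [hA1]
    have hA2' : 0 < (V₂.1 - H.1)^2 + (V₂.2 - H.2)^2 - t := by
      have e : (V₀.1 - V₂.1) * (V₁.1 - V₂.1) + (V₀.2 - V₂.2) * (V₁.2 - V₂.2)
          = (V₂.1 - H.1)^2 + (V₂.2 - H.2)^2 - t := by
        linear_combination -ht - h02 - h12
      linarith [hA2]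
    have htneg : t < 0 := bridge (V₀.1 - H.1) (V₀.2 - H.2) (V₁.1 - H.1) (V₁.2 - H.2)
      (V₂.1 - H.1) (V₂.2 - H.2) t ht.symm h02 h12 hA0' hA1' hA2'
    obtain ⟨s, hsdef⟩ : ∃ s : ℤ, s = -t := ⟨_, rfl⟩
    have hs1 : 1 ≤ s := by omega
    -- vertex norm equalities
    have hv0 : (V₀.1 - H.1)^2 + (V₀.2 - H.2)^2 = d0^2*(p0^2 + q0^2) := by
      rw [hx0, hy0]; ring
    have hv1 : (V₁.1 - H.1)^2 + (V₁.2 - H.2)^2 = d1^2*(p1^2 + q1^2) := by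
      rw [hx1, hy1]; ring
    have hv2 : (V₂.1 - H.1)^2 + (V₂.2 - H.2)^2 = d2^2*(p2^2 + q2^2) := by
      rw [hx2, hy2]; ring
    -- side norm equalities
    have hside0 : (V₁.1 - V₂.1)^2 + (V₁.2 - V₂.2)^2 = ((llen V₁ V₂ : ℤ))^2*(p0^2+q0^2) := by
      rw [hs01, hs02]; ring
    have hside1 : (V₀.1 - V₂.1)^2 + (V₀.2 - V₂.2)^2 = ((llen V₀ V₂ : ℤ))^2*(p1^2+q1^2) := by
      rw [hs11, hs12]; ring
    have hside2 : (V₀.1 - V₁.1)^2 + (V₀.2 - V₁.2)^2 = ((llen V₀ V₁ : ℤ))^2*(p2^2+q2^2) := by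
      rw [hs21, hs22]; ring
    -- E equations
    have hE0 : ((llen V₁ V₂ : ℤ))^2*(p0^2+q0^2)
        = d1^2*(p1^2+q1^2) + d2^2*(p2^2+q2^2) + 2*s := by
      linear_combination -hside0 + hv1 + hv2 + (-2)*h12 + (-2)*hsdef
    have hE1 : ((llen V₀ V₂ : ℤ))^2*(p1^2+q1^2)
        = d0^2*(p0^2+q0^2) + d2^2*(p2^2+q2^2) + 2*s := by
      linear_combination -hside1 + hv0 + hv2 + (-2)*h02 + (-2)*hsdef
    have hE2 : ((llen V₀ V₁ : ℤ))^2*(p2^2+q2^2)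
        = d0^2*(p0^2+q0^2) + d1^2*(p1^2+q1^2) + 2*s := by
      linear_combination -hside2 + hv0 + hv1 + 2*ht + (-2)*hsdef
    have gramW : ((V₀.1-H.1)^2+(V₀.2-H.2)^2) * (((V₁.1-H.1)^2+(V₁.2-H.2)^2) * ((V₂.1-H.1)^2+(V₂.2-H.2)^2))
        + 2*t^3 - t^2*(((V₀.1-H.1)^2+(V₀.2-H.2)^2) + ((V₁.1-H.1)^2+(V₁.2-H.2)^2)
          + ((V₂.1-H.1)^2+(V₂.2-H.2)^2)) = 0 := by
      linear_combination (2*t^2 - ((V₂.1-H.1)^2+(V₂.2-H.2)^2)*(t + ((V₀.1 - H.1)*(V₁.1 - H.1) + (V₀.2 - H.2)*(V₁.2 - H.2))))*ht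
        + (-(2*((V₀.1 - H.1)*(V₁.1 - H.1) + (V₀.2 - H.2)*(V₁.2 - H.2))*t - ((V₀.1-H.1)^2+(V₀.2-H.2)^2)*(t+((V₁.1 - H.1)*(V₂.1 - H.1) + (V₁.2 - H.2)*(V₂.2 - H.2)))))*h12
        + (-(2*((V₀.1 - H.1)*(V₁.1 - H.1) + (V₀.2 - H.2)*(V₁.2 - H.2))*((V₁.1 - H.1)*(V₂.1 - H.1) + (V₁.2 - H.2)*(V₂.2 - H.2)) - ((V₁.1-H.1)^2+(V₁.2-H.2)^2)*(t+((V₀.1 - H.1)*(V₂.1 - H.1) + (V₀.2 - H.2)*(V₂.2 - H.2)))))*h02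
    rw [hv0, hv1, hv2] at gramW
    have hG : (d0^2*(p0^2+q0^2))*(d1^2*(p1^2+q1^2))*(d2^2*(p2^2+q2^2))
        = s^2*(d0^2*(p0^2+q0^2)+d1^2*(p1^2+q1^2)+d2^2*(p2^2+q2^2)) + 2*s^3 := by
      linear_combination gramW + ((t-s)*(d0^2*(p0^2+q0^2)+d1^2*(p1^2+q1^2)+d2^2*(p2^2+q2^2))
        - 2*(s^2 - s*t + t^2))*hsdef
    have hd0 : d0 ≠ 0 := by
      rintro rfl
      rw [hx0, hy0] at ht
      simp at ht
      omega
    have hd1 : d1 ≠ 0 := by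
      rintro rfl
      rw [hx1, hy1] at ht
      simp at ht
      omega
    have hd2 : d2 ≠ 0 := by
      rintro rfl
      rw [hx2, hy2] at h02
      simp at h02
      omega
    have hz0 : llen V₁ V₂ ≠ 0 := fun h => hnz0 (Int.gcd_eq_zero_iff.mp h)
    have hz1 : llen V₀ V₂ ≠ 0 := fun h => hnz1 (Int.gcd_eq_zero_iff.mp h)
    have hz2 : llen V₀ V₁ ≠ 0 := fun h => hnz2 (Int.gcd_eq_zero_iff.mp h)
    have hla : 1 ≤ (llen V₁ V₂ : ℤ) := by exact_mod_cast Nat.one_le_iff_ne_zero.mpr hz0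
    have hlb : 1 ≤ (llen V₀ V₂ : ℤ) := by exact_mod_cast Nat.one_le_iff_ne_zero.mpr hz1
    have hlc : 1 ≤ (llen V₀ V₁ : ℤ) := by exact_mod_cast Nat.one_le_iff_ne_zero.mpr hz2
    obtain ⟨h6, h7⟩ := core' (llen V₁ V₂ : ℤ) (llen V₀ V₂ : ℤ) (llen V₀ V₁ : ℤ) d0 d1 d2
      (p0^2+q0^2) (p1^2+q1^2) (p2^2+q2^2) s hla hlb hlc
      (prim_pos hg0) (prim_pos hg1) (prim_pos hg2) hs1 hd0 hd1 hd2
      (prim_mod4 hg0) (prim_mod4 hg1) (prim_mod4 hg2) hE0 hE1 hE2 hG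
    have hP' : llen V₀ V₁ + llen V₁ V₂ + llen V₀ V₂ = ℓ := hP
    omega
  · intro hl
    rcases Nat.even_or_odd ℓ with he | ho
    · -- even: ℓ = 2h+2, h ≥ 2 : u = h, v = 1, apex h, H = (0,1)
      obtain ⟨h, hh2, hheq⟩ : ∃ h : ℕ, 2 ≤ h ∧ ℓ = 2*h + 2 := by
        obtain ⟨t, ht⟩ := he; exact ⟨t - 1, by omega⟩
      obtain ⟨hac, hor⟩ := fam (h:ℤ) 1 (h:ℤ) 1 (by exact_mod_cast by omega : (0:ℤ) < (h:ℤ))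
        one_pos (by exact_mod_cast by omega) (by ring_nf) (by push_cast; nlinarith [show (2:ℤ) ≤ h from by exact_mod_cast hh2])
      refine ⟨_, _, _, _, hac, hor, ?_⟩
      have hp := perim_fam h 1 h (by omega) one_pos
      norm_num at hp
      rw [hp]
      omega
    · -- odd
      have hsplit : ℓ = 11 ∨ (ℓ % 4 = 1 ∧ 9 ≤ ℓ) ∨ (ℓ % 4 = 3 ∧ 15 ≤ ℓ) := by
        obtain ⟨t, ht⟩ := ho; omega
      rcases hsplit with h11 | hmod
      · -- ℓ = 11 : (-1,0),(6,0),(0,3), H = (0,2)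
        subst h11
        obtain ⟨hac, hor⟩ := fam 1 6 3 2 one_pos (by norm_num) (by norm_num) (by norm_num) (by norm_num)
        refine ⟨_, _, _, _, hac, hor, ?_⟩
        have hp := perim_fam 1 6 3 one_pos (by norm_num)
        norm_num at hp ⊢
        exact hp
      · rcases hmod with ⟨hm, hge⟩ | ⟨hm, hge⟩
        · -- ℓ = 2h+3, h odd ≥ 3, u=h, v=2, H=(0,2)
          obtain ⟨h, hh3, hodd, hheq⟩ : ∃ h : ℕ, 3 ≤ h ∧ h % 2 = 1 ∧ ℓ = 2*h + 3 := ⟨(ℓ-3)/2, by omega⟩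
          have hZ : (3:ℤ) ≤ (h:ℤ) := by exact_mod_cast hh3
          obtain ⟨hac, hor⟩ := fam (h:ℤ) 2 (h:ℤ) 2 (by linarith) two_pos (by linarith)
            (by ring) (by nlinarith)
          refine ⟨_, _, _, _, hac, hor, ?_⟩
          have hp := perim_fam h 2 h (by omega) (by norm_num)
          norm_num at hp
          rw [hp, odd_gcd2 h hodd]
          omega
        · -- ℓ = 2h+5, h odd ≥ 5, u=h, v=4, H=(0,4)
          obtain ⟨h, hh5, hodd, hheq⟩ : ∃ h : ℕ, 5 ≤ h ∧ h % 2 = 1 ∧ ℓ = 2*h + 5 := ⟨(ℓ-5)/2, by omega⟩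
          have hZ : (5:ℤ) ≤ (h:ℤ) := by exact_mod_cast hh5
          obtain ⟨hac, hor⟩ := fam (h:ℤ) 4 (h:ℤ) 4 (by linarith) (by norm_num) (by linarith)
            (by ring) (by nlinarith)
          refine ⟨_, _, _, _, hac, hor, ?_⟩
          have hp := perim_fam h 4 h (by omega) (by norm_num)
          norm_num at hp
          rw [hp, odd_gcd4 h hodd]
          omega
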